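/- Let α, β ∈ (−π, π], let M be an n×n Hermitian unitary complex matrix, and let U = exp(i(α+β)/2)·( cos((α−β)/2)·I + i·sin((α−β)/2)·M ). Then there exist functions μ, ν from (0,∞) to ℂ such that the scattering matrix satisfies S(k) = μ(k)·I + ν(k)·M for every real k > 0. -/

import Mathlib

open Matrix Real

theorem stmt_11 (n : ℕ) (α β : ℝ)
    (hα : α ∈ Set.Ioc (-π) π) (hβ : β ∈ Set.Ioc (-π) π)
    (M : Matrix (Fin n) (Fin n) ℂ)
    (hM : M.IsHermitian) (hMu : M ∈ Matrix.unitaryGroup (Fin n) ℂ)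
    (U : Matrix (Fin n) (Fin n) ℂ)
    (hU : U = Complex.exp (Complex.I * ((α + β) / 2)) •
        ((Real.cos ((α - β) / 2) : ℂ) • (1 : Matrix (Fin n) (Fin n) ℂ) +
          (Complex.I * (Real.sin ((α - β) / 2) : ℂ)) • M)) :
    ∃ μ ν : ℝ → ℂ, ∀ k : ℝ, 0 < k →
      (((k : ℂ) - 1) • U + ((k : ℂ) + 1) • (1 : Matrix (Fin n) (Fin n) ℂ))⁻¹ *
          (((k : ℂ) + 1) • U + ((k : ℂ) - 1) • (1 : Matrix (Fin n) (Fin n) ℂ)) =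
        μ k • (1 : Matrix (Fin n) (Fin n) ℂ) + ν k • M := by
  set a : ℂ := Complex.exp (Complex.I * ((α + β) / 2)) * (Real.cos ((α - β) / 2) : ℂ) with ha
  set b : ℂ := Complex.exp (Complex.I * ((α + β) / 2)) * (Complex.I * (Real.sin ((α - β) / 2) : ℂ)) with hb
  have hexp : ∀ x : ℝ, (Real.cos x : ℂ) + Complex.I * (Real.sin x : ℂ)
      = Complex.exp (Complex.I * x) := by
    intro x
    rw [Complex.ofReal_cos, Complex.ofReal_sin, mul_comm Complex.I (x : ℂ), Complex.exp_mul_I]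
    ring
  have hab1 : a + b = Complex.exp (Complex.I * α) := by
    rw [ha, hb, ← mul_add, hexp, ← Complex.exp_add, ← mul_add]
    congr 1
    push_cast
    ring
  have hab2 : a - b = Complex.exp (Complex.I * β) := by
    have h1 : (Real.cos ((α - β) / 2) : ℂ) - Complex.I * (Real.sin ((α - β) / 2) : ℂ)
        = Complex.exp (Complex.I * (-((α - β) / 2) : ℝ)) := by
      have h := hexp (-((α - β) / 2))
      rw [Real.cos_neg, Real.sin_neg] at h
      push_cast at h ⊢
      linear_combination h
    rw [ha, hb, ← mul_sub, h1, ← Complex.exp_add, ← mul_add]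
    congr 1
    push_cast
    ring
  have hU' : U = a • (1 : Matrix (Fin n) (Fin n) ℂ) + b • M := by
    rw [hU, smul_add, smul_smul, smul_smul]
  have hM2 : M * M = 1 := by
    have h1 := hMu.1
    rwa [Matrix.star_eq_conjTranspose, hM.eq] at h1
  have key : ∀ (k θ : ℝ), 0 < k → ((k : ℂ) - 1) * Complex.exp (Complex.I * θ) + ((k : ℂ) + 1) ≠ 0 := by
    intro k θ hk h
    have h2 : ((k : ℂ) - 1) * Complex.exp (Complex.I * θ) = -((k : ℂ) + 1) := by
      linear_combination h
    have h3 := congrArg (‖·‖) h2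
    rw [norm_mul, norm_neg, mul_comm Complex.I (θ : ℂ),
      Complex.norm_exp_ofReal_mul_I] at h3
    have h4 : ((k : ℂ) - 1) = ((k - 1 : ℝ) : ℂ) := by push_cast; ring
    have h5 : ((k : ℂ) + 1) = ((k + 1 : ℝ) : ℂ) := by push_cast; ring
    rw [h4, h5, Complex.norm_real, Complex.norm_real, Real.norm_eq_abs, Real.norm_eq_abs, mul_one] at h3
    have h6 : |k - 1| < k + 1 := by
      rw [abs_lt]; constructor <;> linarith
    have h7 : |k + 1| = k + 1 := abs_of_pos (by linarith)
    rw [h7] at h3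
    linarith [h3, h6]
  refine ⟨fun k => ((((k:ℂ)-1)*a + ((k:ℂ)+1)) * (((k:ℂ)+1)*a + ((k:ℂ)-1)) - ((k:ℂ)-1)*b * (((k:ℂ)+1)*b)) /
      ((((k:ℂ)-1)*a + ((k:ℂ)+1))^2 - (((k:ℂ)-1)*b)^2),
    fun k => ((((k:ℂ)-1)*a + ((k:ℂ)+1)) * (((k:ℂ)+1)*b) - ((k:ℂ)-1)*b * (((k:ℂ)+1)*a + ((k:ℂ)-1))) /
      ((((k:ℂ)-1)*a + ((k:ℂ)+1))^2 - (((k:ℂ)-1)*b)^2), ?_⟩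
  intro k hk
  beta_reduce
  have hΔ : (((k:ℂ)-1)*a + ((k:ℂ)+1))^2 - (((k:ℂ)-1)*b)^2 ≠ 0 := by
    have h1 : (((k:ℂ)-1)*a + ((k:ℂ)+1))^2 - (((k:ℂ)-1)*b)^2
        = (((k:ℂ)-1) * Complex.exp (Complex.I * α) + ((k:ℂ)+1)) *
          (((k:ℂ)-1) * Complex.exp (Complex.I * β) + ((k:ℂ)+1)) := by
      rw [← hab1, ← hab2]; ring
    rw [h1]
    exact mul_ne_zero (key k α hk) (key k β hk)
  have hA : ((k:ℂ)-1) • U + ((k:ℂ)+1) • (1 : Matrix (Fin n) (Fin n) ℂ)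
      = (((k:ℂ)-1)*a + ((k:ℂ)+1)) • (1 : Matrix (Fin n) (Fin n) ℂ) + (((k:ℂ)-1)*b) • M := by
    rw [hU']; module
  have hB : ((k:ℂ)+1) • U + ((k:ℂ)-1) • (1 : Matrix (Fin n) (Fin n) ℂ)
      = (((k:ℂ)+1)*a + ((k:ℂ)-1)) • (1 : Matrix (Fin n) (Fin n) ℂ) + (((k:ℂ)+1)*b) • M := by
    rw [hU']; module
  have hinv : ((((k:ℂ)-1)*a + ((k:ℂ)+1)) • (1 : Matrix (Fin n) (Fin n) ℂ) + (((k:ℂ)-1)*b) • M)⁻¹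
      = ((((k:ℂ)-1)*a + ((k:ℂ)+1))^2 - (((k:ℂ)-1)*b)^2)⁻¹ •
        ((((k:ℂ)-1)*a + ((k:ℂ)+1)) • (1 : Matrix (Fin n) (Fin n) ℂ) - (((k:ℂ)-1)*b) • M) := by
    apply Matrix.inv_eq_right_inv
    rw [Matrix.mul_smul]
    have expand : ((((k:ℂ)-1)*a + ((k:ℂ)+1)) • (1 : Matrix (Fin n) (Fin n) ℂ) + (((k:ℂ)-1)*b) • M) *
        ((((k:ℂ)-1)*a + ((k:ℂ)+1)) • (1 : Matrix (Fin n) (Fin n) ℂ) - (((k:ℂ)-1)*b) • M)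
        = ((((k:ℂ)-1)*a + ((k:ℂ)+1))^2 - (((k:ℂ)-1)*b)^2) • (1 : Matrix (Fin n) (Fin n) ℂ) := by
      simp only [Matrix.add_mul, Matrix.mul_sub, Matrix.smul_mul, Matrix.mul_smul,
        Matrix.one_mul, Matrix.mul_one, hM2, smul_smul]
      module
    rw [expand, smul_smul, inv_mul_cancel₀ hΔ, one_smul]
  rw [hA, hB, hinv]
  simp only [Matrix.smul_mul, Matrix.sub_mul, Matrix.mul_add, Matrix.add_mul,
    Matrix.mul_smul, Matrix.one_mul, Matrix.mul_one, hM2, smul_smul]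
  simp only [div_eq_inv_mul]
  module
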